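/- For a nonzero linear functional f on an algebra H over a field, if I is maximal among two-sided ideals of H contained in ker(f) and H/I is finite-dimensional, then the span T of the functionals y ↦ f(xyz) (for x, z ∈ H), viewed as functionals on W = H/I, is all of W*. -/

import Mathlib

/-- Let `f` be a nonzero linear functional on an algebra `H` over a field, and `I` a
two-sided ideal maximal among those contained in `ker f`, with `H/I` finite-dimensional.
Then the span of the functionals `y ↦ f(xyz)` (over all `x, z ∈ H`), viewed as
functionals on `W = H/I`, is all of `W*`: every functional vanishing on `I` lies in the
span of the functionals `y ↦ f(xyz)`. -/
theorem stmt18 {k H : Type*} [Field k] [Ring H] [Algebra k H]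
    (f : H →ₗ[k] k) (hf : f ≠ 0)
    (I : Submodule k H)
    (hIl : ∀ x y : H, y ∈ I → x * y ∈ I)
    (hIr : ∀ x y : H, y ∈ I → y * x ∈ I)
    (hIker : ∀ y ∈ I, f y = 0)
    (hmax : ∀ J : Submodule k H, (∀ x y : H, y ∈ J → x * y ∈ J) →
      (∀ x y : H, y ∈ J → y * x ∈ J) → (∀ y ∈ J, f y = 0) → I ≤ J → J = I)
    [FiniteDimensional k (H ⧸ I)] :
    ∀ φ : H →ₗ[k] k, (∀ y ∈ I, φ y = 0) →
      φ ∈ Submodule.span k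
        {g : H →ₗ[k] k |
          ∃ x z : H, g = f ∘ₗ LinearMap.mulLeft k x ∘ₗ LinearMap.mulRight k z} := by
  intro φ hφ
  -- the functionals g_{x,z} vanish on I
  have hgI : ∀ (x z : H) (i : H), i ∈ I →
      (f ∘ₗ LinearMap.mulLeft k x ∘ₗ LinearMap.mulRight k z) i = 0 := by
    intro x z i hi
    simp only [LinearMap.coe_comp, Function.comp_apply, LinearMap.mulRight_apply,
      LinearMap.mulLeft_apply]
    exact hIker _ (hIl x _ (hIr z i hi))
  -- set of induced functionals on the quotient
  set S : Set (Module.Dual k (H ⧸ I)) :=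
    {g | ∃ x z : H, g ∘ₗ I.mkQ = f ∘ₗ LinearMap.mulLeft k x ∘ₗ LinearMap.mulRight k z}
    with hS
  -- the "annihilator" ideal J
  let J : Submodule k H :=
    { carrier := {y | ∀ x z : H, f (x * (y * z)) = 0}
      add_mem' := by
        intro a b ha hb x z
        have : x * ((a + b) * z) = x * (a * z) + x * (b * z) := by
          rw [add_mul, mul_add]
        rw [this, map_add, ha x z, hb x z, add_zero]
      zero_mem' := by intro x z; simp
      smul_mem' := by
        intro c a ha x z
        have : x * ((c • a) * z) = c • (x * (a * z)) := by
          rw [smul_mul_assoc, mul_smul_comm]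
        rw [this, map_smul, ha x z, smul_zero] }
  have hJI : J = I := by
    apply hmax J
    · intro x y hy a z
      have : a * ((x * y) * z) = (a * x) * (y * z) := by
        rw [mul_assoc, mul_assoc]
      rw [this]; exact hy (a * x) z
    · intro x y hy a z
      have : a * ((y * x) * z) = a * (y * (x * z)) := by rw [mul_assoc]
      rw [this]; exact hy a (x * z)
    · intro y hy
      have := hy 1 1
      simpa using this
    · intro y hy x z
      exact hIker _ (hIl x _ (hIr z y hy))
  -- coannihilator of span S is ⊥
  have hco : (Submodule.span k S).dualCoannihilator = ⊥ := by
    rw [Submodule.eq_bot_iff]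
    intro w hw
    obtain ⟨y, rfl⟩ := Submodule.Quotient.mk_surjective I w
    rw [Submodule.mem_dualCoannihilator] at hw
    have hyJ : y ∈ J := by
      intro x z
      have hg : (I.liftQ (f ∘ₗ LinearMap.mulLeft k x ∘ₗ LinearMap.mulRight k z)
          (fun i hi => hgI x z i hi)) ∈ S := ⟨x, z, Submodule.liftQ_mkQ _ _ _⟩
      have := hw _ (Submodule.subset_span hg)
      exact this
    have hyI : y ∈ I := hJI ▸ hyJ
    simpa using (Submodule.Quotient.mk_eq_zero I).2 hyI
  have htop : Submodule.span k S = ⊤ := by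
    have h := Subspace.dualCoannihilator_dualAnnihilator_eq (W := Submodule.span k S)
    rw [hco, Submodule.dualAnnihilator_bot] at h
    exact h.symm
  -- lift φ and pull back
  set φ' : Module.Dual k (H ⧸ I) := I.liftQ φ (fun i hi => hφ i hi) with hφ'
  have hφ'mem : φ' ∈ Submodule.span k S := htop ▸ Submodule.mem_top
  let L : Module.Dual k (H ⧸ I) →ₗ[k] (H →ₗ[k] k) := LinearMap.lcomp k k I.mkQ
  have hmap : L φ' ∈ Submodule.map L (Submodule.span k S) := ⟨φ', hφ'mem, rfl⟩
  rw [Submodule.map_span] at hmap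
  have hsub : L '' S ⊆
      {g : H →ₗ[k] k |
        ∃ x z : H, g = f ∘ₗ LinearMap.mulLeft k x ∘ₗ LinearMap.mulRight k z} := by
    rintro g ⟨g', ⟨x, z, hg'⟩, rfl⟩
    exact ⟨x, z, hg'⟩
  have hφL : φ = L φ' := by
    ext y
    simp [L, hφ']
    rfl
  rw [hφL]
  exact Submodule.span_mono hsub hmap
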